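/- Let G be a k-regular graph on n vertices, and let L(G) be its line graph. Any simple-majority monopoly of L(G) (where each vertex e of L(G) has threshold d_{L(G)}(e)/2 = k−1) has cardinality at least n(k−1)/4. -/
import Mathlib


open SimpleGraph

/-- `M` is a `t`-monopoly in `G`: every vertex outside `M` has at least `t` neighbors in `M`. -/
def IsMonopoly {V : Type*} (G : SimpleGraph V) (t : ℕ) (M : Set V) : Prop :=
  ∀ v ∉ M, t ≤ (G.neighborSet v ∩ M).ncard

/-- The `t`-monopoly number: least cardinality of a `t`-monopoly. -/
noncomputable def monNum {V : Type*} (G : SimpleGraph V) (t : ℕ) : ℕ :=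
  sInf {k | ∃ M : Set V, IsMonopoly G t M ∧ M.ncard = k}
/-- For a `k`-regular graph `G` on `n` vertices, any simple-majority monopoly of the line
graph `L(G)` (threshold `k − 1` at every vertex) has cardinality at least `n(k−1)/4`. -/
theorem lineGraph_majority_monopoly_lower {V : Type*} [Fintype V] (G : SimpleGraph V) [DecidableRel G.Adj]
    (n k : ℕ) (hn : Fintype.card V = n) (hreg : G.IsRegularOfDegree k)
    (M : Set G.edgeSet) (hM : IsMonopoly (lineGraph G) (k - 1) M) :
    n * (k - 1) ≤ 4 * M.ncard := by
  classical
  rcases Nat.eq_zero_or_pos k with hk0 | hk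
  · simp [hk0]
  have hk1 : 1 ≤ k := hk
  have hMfin : M.Finite := Set.toFinite M
  set Mf : Finset G.edgeSet := hMfin.toFinset with hMfdef
  have hMcard : M.ncard = Mf.card := Set.ncard_eq_toFinset_card _ hMfin
  -- representation of edges
  have hrep : ∀ (e : Sym2 V), e ∈ G.edgeSet → ∃ a b, a ≠ b ∧ e = s(a, b) := by
    intro e
    induction e using Sym2.ind with
    | _ a b => intro he; exact ⟨a, b, (G.mem_edgeSet.mp he).ne, rfl⟩
  set f : V → ℕ := fun v => (Mf.filter (fun e : G.edgeSet => v ∈ (e : Sym2 V))).card with hfdef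
  -- incidence count
  have hinc : ∀ v, (Finset.univ.filter (fun e : G.edgeSet => v ∈ (e : Sym2 V))).card = k := by
    intro v
    rw [← hreg v, ← SimpleGraph.card_incidenceFinset_eq_degree]
    refine Finset.card_bij (fun (e : G.edgeSet) (_ : e ∈ Finset.univ.filter (fun e : G.edgeSet => v ∈ (e : Sym2 V))) => (e : Sym2 V)) ?_ ?_ ?_
    · intro e he
      rw [SimpleGraph.mem_incidenceFinset]
      exact ⟨e.2, by simpa using (Finset.mem_filter.mp he).2⟩
    · intro e₁ _ e₂ _ h; exact Subtype.ext h
    · intro e he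
      rw [SimpleGraph.mem_incidenceFinset] at he
      exact ⟨⟨e, he.1⟩, by simp [he.2], rfl⟩
  have hfk : ∀ v, f v ≤ k := by
    intro v
    rw [← hinc v]
    exact Finset.card_le_card (Finset.filter_subset_filter _ (Finset.subset_univ _))
  -- generic double counting: sum over vertices of incidences with a finset of edges
  have hdouble : ∀ s : Finset G.edgeSet,
      ∑ v, (s.filter (fun e : G.edgeSet => v ∈ (e : Sym2 V))).card = 2 * s.card := by
    intro s
    have h1 : ∀ v, (s.filter (fun e : G.edgeSet => v ∈ (e : Sym2 V))).card
        = ∑ e ∈ s, if v ∈ (e : Sym2 V) then 1 else 0 := fun v => by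
      rw [Finset.card_filter]
    simp only [h1]
    rw [Finset.sum_comm]
    have h2 : ∀ e ∈ s, (∑ v : V, if v ∈ (e : Sym2 V) then 1 else 0) = 2 := by
      intro e _
      obtain ⟨a, b, hab, heq⟩ := hrep e.1 e.2
      rw [← Finset.card_filter]
      have : (Finset.univ.filter (fun v : V => v ∈ (e : Sym2 V))) = {a, b} := by
        ext v; simp [heq, Sym2.mem_iff]
      rw [this, Finset.card_insert_of_notMem (by simp [hab]), Finset.card_singleton]
    rw [Finset.sum_congr rfl h2, Finset.sum_const, smul_eq_mul, mul_comm]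
  -- the monopoly condition in terms of f
  have hkey : ∀ e : G.edgeSet, e ∉ Mf → ∀ a b : V, (e : Sym2 V) = s(a, b) →
      k - 1 ≤ f a + f b := by
    intro e he a b heq
    have heM : e ∉ M := fun h => he (hMfin.mem_toFinset.mpr h)
    have hm := hM e heM
    refine hm.trans ?_
    have hsub : (lineGraph G).neighborSet e ∩ M ⊆
        ↑(Mf.filter (fun x : G.edgeSet => a ∈ (x : Sym2 V)) ∪
          Mf.filter (fun x : G.edgeSet => b ∈ (x : Sym2 V))) := by
      rintro x ⟨hadj, hxM⟩
      have hxMf : x ∈ Mf := hMfin.mem_toFinset.mpr hxM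
      rw [SimpleGraph.mem_neighborSet, SimpleGraph.lineGraph_adj_iff_exists] at hadj
      obtain ⟨-, v, hv1, hv2⟩ := hadj
      rw [heq, Sym2.mem_iff] at hv1
      simp only [Finset.coe_union, Set.mem_union, Finset.mem_coe, Finset.mem_filter]
      rcases hv1 with rfl | rfl
      · exact Or.inl ⟨hxMf, hv2⟩
      · exact Or.inr ⟨hxMf, hv2⟩
    calc ((lineGraph G).neighborSet e ∩ M).ncard
        ≤ (↑(Mf.filter (fun x : G.edgeSet => a ∈ (x : Sym2 V)) ∪
            Mf.filter (fun x : G.edgeSet => b ∈ (x : Sym2 V))) : Set G.edgeSet).ncard :=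
          Set.ncard_le_ncard hsub (Set.toFinite _)
      _ = (Mf.filter (fun x : G.edgeSet => a ∈ (x : Sym2 V)) ∪
            Mf.filter (fun x : G.edgeSet => b ∈ (x : Sym2 V))).card := Set.ncard_coe_finset _
      _ ≤ f a + f b := Finset.card_union_le _ _
  -- non-monopoly edges
  set nonM : Finset G.edgeSet := Mfᶜ with hnonMdef
  -- counting incidences with nonM
  have hcount : ∀ v, f v + (nonM.filter (fun e : G.edgeSet => v ∈ (e : Sym2 V))).card = k := by
    intro v
    rw [← hinc v]
    rw [← Finset.card_union_of_disjoint
      (Finset.disjoint_filter_filter (disjoint_compl_right))]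
    congr 1
    rw [← Finset.filter_union, Finset.union_compl]
  -- main double count over non-monopoly edges
  have hswap : ∑ v, f v * (nonM.filter (fun e : G.edgeSet => v ∈ (e : Sym2 V))).card
      = ∑ e ∈ nonM, ∑ v ∈ Finset.univ.filter (fun v : V => v ∈ (e : Sym2 V)), f v := by
    have h1 : ∀ e : G.edgeSet, (∑ v ∈ Finset.univ.filter (fun v : V => v ∈ (e : Sym2 V)), f v)
        = ∑ v : V, if v ∈ (e : Sym2 V) then f v else 0 := fun e => by
      rw [Finset.sum_filter]
    simp only [h1]
    rw [Finset.sum_comm]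
    refine Finset.sum_congr rfl fun v _ => ?_
    rw [← Finset.sum_filter, Finset.sum_const, smul_eq_mul, mul_comm]
  have hmain : (k - 1) * nonM.card
      ≤ ∑ v, f v * (nonM.filter (fun e : G.edgeSet => v ∈ (e : Sym2 V))).card := by
    rw [hswap]
    have : ∀ e ∈ nonM, k - 1 ≤ ∑ v ∈ Finset.univ.filter (fun v : V => v ∈ (e : Sym2 V)), f v := by
      intro e he
      obtain ⟨a, b, hab, heq⟩ := hrep e.1 e.2
      have hfilter : (Finset.univ.filter (fun v : V => v ∈ (e : Sym2 V))) = {a, b} := by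
        ext v; simp [heq, Sym2.mem_iff]
      rw [hfilter, Finset.sum_pair hab]
      exact hkey e (by simpa [hnonMdef] using he) a b heq
    calc (k - 1) * nonM.card = nonM.card • (k - 1) := by rw [smul_eq_mul, mul_comm]
      _ ≤ _ := Finset.card_nsmul_le_sum _ _ _ this
  -- pass to integers
  have hfsum : ∑ v, f v = 2 * Mf.card := hdouble Mf
  have hcastcount : ∀ v, ((nonM.filter (fun e : G.edgeSet => v ∈ (e : Sym2 V))).card : ℤ)
      = (k : ℤ) - (f v : ℤ) := by
    intro v
    have := hcount v
    omega
  have hA : ∑ v, (f v : ℤ) = 2 * (Mf.card : ℤ) := by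
    rw [← Nat.cast_sum]
    exact_mod_cast congrArg (Nat.cast : ℕ → ℤ) hfsum
  have hB : ∑ v, ((k : ℤ) - (f v : ℤ)) = 2 * (nonM.card : ℤ) := by
    have := hdouble nonM
    calc ∑ v, ((k : ℤ) - (f v : ℤ))
        = ∑ v, ((nonM.filter (fun e : G.edgeSet => v ∈ (e : Sym2 V))).card : ℤ) := by
          refine Finset.sum_congr rfl fun v _ => (hcastcount v).symm
      _ = ((∑ v, (nonM.filter (fun e : G.edgeSet => v ∈ (e : Sym2 V))).card : ℕ) : ℤ) := by
          rw [Nat.cast_sum]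
      _ = 2 * (nonM.card : ℤ) := by rw [this]; push_cast; ring
  have hC : ((k : ℤ) - 1) * (nonM.card : ℤ)
      ≤ ∑ v, (f v : ℤ) * ((k : ℤ) - (f v : ℤ)) := by
    have hcast : ∑ v, (f v : ℤ) * ((k : ℤ) - (f v : ℤ))
        = ((∑ v, f v * (nonM.filter (fun e : G.edgeSet => v ∈ (e : Sym2 V))).card : ℕ) : ℤ) := by
      rw [Nat.cast_sum]
      refine Finset.sum_congr rfl fun v _ => ?_
      rw [Nat.cast_mul, hcastcount v]
    rw [hcast]
    have hcast2 : ((k : ℤ) - 1) * (nonM.card : ℤ) = (((k - 1) * nonM.card : ℕ) : ℤ) := by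
      push_cast [hk1]; ring
    rw [hcast2]
    exact_mod_cast hmain
  -- the quadratic trick
  set g : V → ℤ := fun v => 2 * (f v : ℤ) - ((k : ℤ) - 1) with hgdef
  have hiden : ∑ v, (((k : ℤ) + 1) * g v - (g v) ^ 2)
      = 4 * (∑ v, (f v : ℤ) * ((k : ℤ) - (f v : ℤ)))
        - 2 * ((k : ℤ) - 1) * (∑ v, ((k : ℤ) - (f v : ℤ))) := by
    rw [Finset.mul_sum, Finset.mul_sum, ← Finset.sum_sub_distrib]
    refine Finset.sum_congr rfl fun v _ => ?_
    simp only [hgdef]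
    ring
  have hQ : (0 : ℤ) ≤ ∑ v, (g v) ^ 2 :=
    Finset.sum_nonneg fun v _ => sq_nonneg _
  have hgsum : ∑ v, g v = 4 * (Mf.card : ℤ) - (n : ℤ) * ((k : ℤ) - 1) := by
    simp only [hgdef]
    rw [Finset.sum_sub_distrib, ← Finset.mul_sum, hA, Finset.sum_const, Finset.card_univ, hn]
    ring
  have hsplit : ∑ v, (((k : ℤ) + 1) * g v - (g v) ^ 2)
      = ((k : ℤ) + 1) * (∑ v, g v) - ∑ v, (g v) ^ 2 := by
    rw [Finset.sum_sub_distrib, Finset.mul_sum]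
  have hineq : 0 ≤ ((k : ℤ) + 1) * (∑ v, g v) := by
    have h1 : 0 ≤ ∑ v, (((k : ℤ) + 1) * g v - (g v) ^ 2) := by
      rw [hiden, hB]
      nlinarith [hC]
    rw [hsplit] at h1
    linarith
  have hkpos : (0 : ℤ) < (k : ℤ) + 1 := by positivity
  have hgs : 0 ≤ ∑ v, g v := nonneg_of_mul_nonneg_right hineq hkpos
  rw [hgsum] at hgs
  rw [hMcard]
  have : (n : ℤ) * ((k : ℤ) - 1) ≤ 4 * (Mf.card : ℤ) := by linarith
  zify [hk1]
  linarith
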